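/- Let G be a countable group acting by homeomorphisms on a Hausdorff space X. The stabilizer map Stab : X → Sub(G), x ↦ G_x, is continuous at a point x ∈ X (with respect to the Chabauty topology on Sub(G)) if and only if for every g ∈ G fixing x, the fixed-point set Fix(g) contains a neighbourhood of x. -/
import Mathlib


/-- The Chabauty topology on the space of subgroups of `G`: the topology induced by the
inclusion of `Sub(G)` into the product space `{0,1}^G`. -/
noncomputable instance chabautyTopology {G : Type*} [Group G] :
    TopologicalSpace (Subgroup G) :=
  TopologicalSpace.induced
    (fun H : Subgroup G => fun g : G => @decide (g ∈ H) (Classical.propDecidable _))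
    inferInstance

/-- The stabilizer map `x ↦ G_x` is continuous at `x` (for the Chabauty topology) if and
only if for every `g` fixing `x`, the fixed-point set of `g` contains a neighbourhood
of `x` (i.e. `G_x = G_x⁰`). -/
theorem continuousAt_stabilizer_iff {G X : Type*} [Group G] [Countable G]
    [TopologicalSpace X] [T2Space X] [MulAction G X]
    (hcont : ∀ g : G, Continuous fun x : X => g • x) (x : X) :
    ContinuousAt (fun y : X => MulAction.stabilizer G y) x ↔
      ∀ g : G, g • x = x → ∃ U ∈ nhds x, ∀ y ∈ U, g • y = y := by
  have hind : Topology.IsInducing (fun H : Subgroup G =>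
      fun g : G => @decide (g ∈ H) (Classical.propDecidable _)) := ⟨rfl⟩
  rw [hind.continuousAt_iff, continuousAt_pi]
  simp only [Function.comp]
  constructor
  · intro h g hg
    have hc := h g
    rw [ContinuousAt, nhds_discrete Bool, Filter.tendsto_pure] at hc
    have hx : @decide (g ∈ MulAction.stabilizer G x) (Classical.propDecidable _) = true :=
      @decide_eq_true _ (Classical.propDecidable _) hg
    refine ⟨{y | g • y = y}, ?_, fun y hy => hy⟩
    exact hc.mono fun y hy => @of_decide_eq_true _ (Classical.propDecidable _) (hy.trans hx)
  · intro h g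
    rw [ContinuousAt, nhds_discrete Bool, Filter.tendsto_pure]
    by_cases hg : g • x = x
    · obtain ⟨U, hU, hU2⟩ := h g hg
      filter_upwards [hU] with y hy
      rw [decide_eq_decide]
      simp only [MulAction.mem_stabilizer_iff]
      exact iff_of_true (hU2 y hy) hg
    · have hopen : IsOpen {y : X | ¬ g • y = y} :=
        (isClosed_eq (hcont g) continuous_id).isOpen_compl
      filter_upwards [hopen.mem_nhds hg] with y hy
      rw [decide_eq_decide]
      simp only [MulAction.mem_stabilizer_iff]
      exact iff_of_false hy hg
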